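/- Let τ ∈ (0,2) be real and let L₁,L₂,L₃,L₄ ∈ SL(2,ℂ) be admissible for τ with trace coordinates x = tr(L₁L₂), y = tr(L₂L₃), z = tr(L₂L₄). Then there exists U ∈ SL(2,ℂ) such that U·Lⱼ·U⁻¹ ∈ SU(2) for all j = 1,2,3,4 if and only if x and y are real with −2 < x < 2 and −2 < y < 2 and z is real. -/

import Mathlib

open Matrix Complex

local notation "conj'" => starRingEnd ℂ

set_option linter.unusedTactic false
set_option linter.unreachableTactic false
set_option linter.unusedVariables false
set_option linter.unnecessarySimpa false
set_option maxHeartbeats 1000000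


lemma star_fin_two (a b c d : ℂ) :
    star !![a, b; c, d] = !![conj' a, conj' c; conj' b, conj' d] := by
  ext i j
  fin_cases i <;> fin_cases j <;> rfl

lemma mat2_entries {a b c d a' b' c' d' : ℂ} (h : !![a,b;c,d] = !![a',b';c',d']) :
    a = a' ∧ b = b' ∧ c = c' ∧ d = d' := by
  refine ⟨?_, ?_, ?_, ?_⟩
  · simpa using congrFun (congrFun h 0) 0
  · simpa using congrFun (congrFun h 0) 1
  · simpa using congrFun (congrFun h 1) 0
  · simpa using congrFun (congrFun h 1) 1

lemma unitary_of_form (a b : ℂ) (h : a * conj' a + b * conj' b = 1) :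
    !![a, b; -conj' b, conj' a] ∈ Matrix.unitaryGroup (Fin 2) ℂ := by
  rw [Matrix.mem_unitaryGroup_iff, star_fin_two, Matrix.mul_fin_two, Matrix.one_fin_two]
  ext i j
  fin_cases i <;> fin_cases j <;>
    simp only [map_neg, Complex.conj_conj, Matrix.cons_val', Matrix.cons_val_zero,
      Matrix.cons_val_one, Matrix.head_cons, Matrix.head_fin_const, Matrix.empty_val',
      Matrix.cons_val_fin_one, Fin.mk_zero, Fin.mk_one, Fin.isValue, Matrix.of_apply] <;>
    first | ring1 | linear_combination h | linear_combination -h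

lemma star_eq_adjugate (A : Matrix (Fin 2) (Fin 2) ℂ)
    (hA : A ∈ Matrix.unitaryGroup (Fin 2) ℂ) (hd : A.det = 1) :
    star A = A.adjugate := by
  have h1 : A * star A = 1 := Matrix.mem_unitaryGroup_iff.mp hA
  have h2 : A.adjugate * A = 1 := by rw [Matrix.adjugate_mul, hd, one_smul]
  calc star A = (A.adjugate * A) * star A := by rw [h2, one_mul]
    _ = A.adjugate * (A * star A) := by rw [mul_assoc]
    _ = A.adjugate := by rw [h1, mul_one]

lemma trace_adjugate_fin_two (A : Matrix (Fin 2) (Fin 2) ℂ) :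
    A.adjugate.trace = A.trace := by
  rw [Matrix.adjugate_fin_two, Matrix.trace_fin_two, Matrix.trace_fin_two]
  simp [add_comm]

lemma neg_one_fin_two : (-1 : Matrix (Fin 2) (Fin 2) ℂ) = !![-1, 0; 0, -1] := by
  rw [Matrix.one_fin_two]
  ext i j
  fin_cases i <;> fin_cases j <;> simp [Matrix.neg_apply]

lemma su2_trace (A : Matrix (Fin 2) (Fin 2) ℂ)
    (hA : A ∈ Matrix.unitaryGroup (Fin 2) ℂ) (hd : A.det = 1) :
    A.trace.im = 0 ∧ -2 ≤ A.trace.re ∧ A.trace.re ≤ 2 ∧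
      (A.trace.re = 2 → A = 1) ∧ (A.trace.re = -2 → A = -1) := by
  obtain ⟨a, b, c, d, hA'⟩ : ∃ a b c d, A = !![a,b;c,d] := ⟨_,_,_,_, Matrix.eta_fin_two A⟩
  subst hA'
  have hs := star_eq_adjugate _ hA hd
  rw [star_fin_two, Matrix.adjugate_fin_two_of] at hs
  obtain ⟨e1, e2, e3, e4⟩ := mat2_entries hs
  rw [Matrix.det_fin_two_of] at hd
  have hd' : a * conj' a + b * conj' b = 1 := by linear_combination hd + a*e1 + b*e3
  rw [Complex.mul_conj, Complex.mul_conj] at hd'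
  have h1 : normSq a + normSq b = 1 := by exact_mod_cast hd'
  have htr : (!![a,b;c,d]).trace = a + conj' a := by rw [Matrix.trace_fin_two_of, e1]
  rw [htr]
  have hre : (a + conj' a).re = 2 * a.re := by simp [Complex.add_re]; ring
  have him : (a + conj' a).im = 0 := by simp
  have hna : normSq a = a.re * a.re + a.im * a.im := Complex.normSq_apply a
  have hnb : 0 ≤ normSq b := Complex.normSq_nonneg b
  have hia : 0 ≤ a.im * a.im := mul_self_nonneg _
  refine ⟨him, by rw [hre]; nlinarith, by rw [hre]; nlinarith, ?_, ?_⟩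
  · intro h2
    rw [hre] at h2
    have hre1 : a.re = 1 := by linarith
    have him0 : a.im = 0 := by nlinarith
    have ha1 : a = 1 := Complex.ext (by simp [hre1]) (by simp [him0])
    have hb0 : b = 0 := by
      have : normSq b = 0 := by rw [hna, hre1, him0] at h1; nlinarith
      exact Complex.normSq_eq_zero.mp this
    have hc0 : c = 0 := by rw [hb0] at e3; simpa using e3.symm
    have hd1 : d = 1 := by rw [ha1] at e1; simpa using e1.symm
    rw [ha1, hb0, hc0, hd1, Matrix.one_fin_two]
  · intro h2
    rw [hre] at h2
    have hre1 : a.re = -1 := by linarith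
    have him0 : a.im = 0 := by nlinarith
    have ha1 : a = -1 := Complex.ext (by simp [hre1]) (by simp [him0])
    have hb0 : b = 0 := by
      have : normSq b = 0 := by rw [hna, hre1, him0] at h1; nlinarith
      exact Complex.normSq_eq_zero.mp this
    have hc0 : c = 0 := by rw [hb0] at e3; simpa using e3.symm
    have hd1 : d = -1 := by rw [ha1] at e1; simpa using e1.symm
    rw [ha1, hb0, hc0, hd1, neg_one_fin_two]

noncomputable def sqrtc (w : ℂ) : ℂ := w ^ (((2:ℕ):ℂ))⁻¹

lemma sqrtc_sq (w : ℂ) : (sqrtc w)^2 = w := by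
  have := Complex.cpow_nat_inv_pow w (n := 2) two_ne_zero
  simpa [sqrtc] using this

lemma diagonalize (M : Matrix (Fin 2) (Fin 2) ℂ) (htr : M.trace = 0) (hdet : M.det = 1) :
    ∃ V : Matrix (Fin 2) (Fin 2) ℂ, V.det = 1 ∧
      M * V = V * !![Complex.I, 0; 0, -Complex.I] := by
  obtain ⟨m, b, c, d, hM⟩ : ∃ a b c d, M = !![a,b;c,d] := ⟨_,_,_,_, Matrix.eta_fin_two M⟩
  subst hM
  rw [Matrix.trace_fin_two_of] at htr
  rw [Matrix.det_fin_two_of] at hdet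
  have hd0 : d = -m := by linear_combination htr
  subst hd0
  by_cases hc : c ≠ 0
  · set s := sqrtc (2*Complex.I*c)⁻¹ with hs
    have hs2 : s^2 = (2*Complex.I*c)⁻¹ := sqrtc_sq _
    have h2Ic : (2*Complex.I*c) ≠ 0 := by
      simp [Complex.I_ne_zero, hc]
    refine ⟨s • !![m+Complex.I, m-Complex.I; c, c], ?_, ?_⟩
    · rw [Matrix.det_smul, Matrix.det_fin_two_of]
      have h5 : (m+Complex.I)*c - (m-Complex.I)*c = 2*Complex.I*c := by ring
      simp only [Fintype.card_fin]
      rw [h5, hs2]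
      field_simp
    · rw [Matrix.mul_smul, Matrix.smul_mul]
      congr 1
      rw [Matrix.mul_fin_two, Matrix.mul_fin_two]
      ext i j
      fin_cases i <;> fin_cases j <;> simp <;>
        first | ring1 | linear_combination hdet | linear_combination -hdet | linear_combination Complex.I_sq | linear_combination -Complex.I_sq | linear_combination hdet + Complex.I_sq | linear_combination -hdet - Complex.I_sq | linear_combination 2*hdet + Complex.I_sq | linear_combination -2*hdet - Complex.I_sq | linear_combination hdet - Complex.I_sq | linear_combination -hdet + Complex.I_sq | linear_combination 2*Complex.I_sq | linear_combination -2*Complex.I_sq | linear_combination 2*hdet - Complex.I_sq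
  · push_neg at hc
    subst hc
    by_cases hb : b ≠ 0
    · set s := sqrtc (-2*Complex.I*b)⁻¹ with hs
      have hs2 : s^2 = (-2*Complex.I*b)⁻¹ := sqrtc_sq _
      have h2Ib : (-2*Complex.I*b) ≠ 0 := by
        simp [Complex.I_ne_zero, hb]
      refine ⟨s • !![b, b; -m+Complex.I, -m-Complex.I], ?_, ?_⟩
      · rw [Matrix.det_smul, Matrix.det_fin_two_of]
        have h5 : b*(-m-Complex.I) - b*(-m+Complex.I) = -2*Complex.I*b := by ring
        simp only [Fintype.card_fin]
        rw [h5, hs2]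
        field_simp
      · rw [Matrix.mul_smul, Matrix.smul_mul]
        congr 1
        rw [Matrix.mul_fin_two, Matrix.mul_fin_two]
        ext i j
        fin_cases i <;> fin_cases j <;> simp <;>
          first | ring1 | linear_combination hdet | linear_combination -hdet | linear_combination Complex.I_sq | linear_combination -Complex.I_sq | linear_combination hdet + Complex.I_sq | linear_combination -hdet - Complex.I_sq | linear_combination 2*hdet + Complex.I_sq | linear_combination -2*hdet - Complex.I_sq | linear_combination hdet - Complex.I_sq | linear_combination -hdet + Complex.I_sq | linear_combination 2*Complex.I_sq | linear_combination -2*Complex.I_sq | linear_combination 2*hdet - Complex.I_sq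
    · push_neg at hb
      subst hb
      have hm : (m - Complex.I) * (m + Complex.I) = 0 := by
        have : m^2 = -1 := by linear_combination -hdet
        linear_combination this - Complex.I_sq
      rcases mul_eq_zero.mp hm with h | h
      · have hmI : m = Complex.I := by linear_combination h
        subst hmI
        refine ⟨1, Matrix.det_one, ?_⟩
        rw [one_mul, mul_one]
      · have hmI : m = -Complex.I := by linear_combination h
        subst hmI
        refine ⟨!![0,1;-1,0], by rw [Matrix.det_fin_two_of]; ring, ?_⟩
        rw [Matrix.mul_fin_two, Matrix.mul_fin_two]
        ext i j
        fin_cases i <;> fin_cases j <;> simp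

lemma purely_imag (x a : ℂ) (ha : 2*Complex.I*a = x) (hxim : x.im = 0) :
    a.re = 0 ∧ x.re = -2*a.im := by
  have h1 := congrArg Complex.im ha
  have h2 := congrArg Complex.re ha
  simp [Complex.mul_im, Complex.mul_re] at h1 h2
  exact ⟨by rw [hxim] at h1; linarith, by linarith⟩

lemma bc_real (a b c : ℂ) (α : ℝ) (hare : a.re = 0) (hα : a.im = α)
    (hdet : -(a^2) - b*c = 1) : b * c = ((α^2 - 1 : ℝ) : ℂ) := by
  have haI : a = Complex.I * (α:ℂ) := by
    apply Complex.ext <;> simp [hare, hα]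
  push_cast
  linear_combination -hdet - (a + Complex.I*(α:ℂ))*haI - (α:ℂ)^2*Complex.I_sq

lemma core (τ : ℝ) (hτ0 : 0 < τ) (x y z : ℂ) (a b c a' b' c' : ℂ)
    (hdet1 : -(a^2) - b*c = 1) (hdet2 : -(a'^2) - b'*c' = 1)
    (ha : 2*Complex.I*a = x) (ha' : 2*Complex.I*a' = y)
    (hT : Complex.I*(c*b' - b*c') = (τ:ℂ))
    (hZ : 2*a*a' - b*c' - c*b' = z)
    (hxim : x.im = 0) (hx1 : -2 < x.re) (hx2 : x.re < 2)
    (hyim : y.im = 0) (hy1 : -2 < y.re) (hy2 : y.re < 2) (hzim : z.im = 0) :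
    ∃ l : ℝ, 0 < l ∧ c = -((l:ℝ):ℂ)^4 * conj' b ∧ c' = -((l:ℝ):ℂ)^4 * conj' b' ∧
      conj' a = -a ∧ conj' a' = -a' := by
  obtain ⟨hare, hxre⟩ := purely_imag x a ha hxim
  obtain ⟨hare', hyre⟩ := purely_imag y a' ha' hyim
  set α := a.im with hα
  set α' := a'.im with hα'
  have hbc : b * c = ((α^2 - 1 : ℝ) : ℂ) := bc_real a b c α hare rfl hdet1
  have hbc' : b' * c' = ((α'^2 - 1 : ℝ) : ℂ) := bc_real a' b' c' α' hare' rfl hdet2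
  set p : ℝ := α^2 - 1 with hp
  set q : ℝ := α'^2 - 1 with hq
  have hpneg : p < 0 := by rw [hp]; nlinarith
  have hqneg : q < 0 := by rw [hq]; nlinarith
  have hb0 : b ≠ 0 := by
    intro h; rw [h, zero_mul] at hbc
    have : p = 0 := by exact_mod_cast hbc.symm
    linarith
  have hb0' : b' ≠ 0 := by
    intro h; rw [h, zero_mul] at hbc'
    have : q = 0 := by exact_mod_cast hbc'.symm
    linarith
  have hnsb : Complex.normSq b ≠ 0 := fun h => hb0 (Complex.normSq_eq_zero.mp h)
  have hnsb' : Complex.normSq b' ≠ 0 := fun h => hb0' (Complex.normSq_eq_zero.mp h)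
  set r : ℝ := p / Complex.normSq b with hr
  set s : ℝ := q / Complex.normSq b' with hs
  have hcr : c = (r:ℂ) * conj' b := by
    have key : c * ((Complex.normSq b : ℝ):ℂ) = (p:ℂ) * conj' b := by
      linear_combination (conj' b) * hbc - c * Complex.mul_conj b
    rw [hr]
    push_cast
    rw [div_mul_eq_mul_div, eq_div_iff (by exact_mod_cast hnsb)]
    linear_combination key
  have hcr' : c' = (s:ℂ) * conj' b' := by
    have key : c' * ((Complex.normSq b' : ℝ):ℂ) = (q:ℂ) * conj' b' := by
      linear_combination (conj' b') * hbc' - c' * Complex.mul_conj b'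
    rw [hs]
    push_cast
    rw [div_mul_eq_mul_div, eq_div_iff (by exact_mod_cast hnsb')]
    linear_combination key
  set w : ℂ := conj' b * b' with hw
  -- equation from τ
  have E1 : (r:ℂ) * w - (s:ℂ) * conj' w = -Complex.I * (τ:ℂ) := by
    rw [hw]
    simp only [_root_.map_mul, Complex.conj_conj]
    linear_combination -Complex.I * hT + (c*b' - b*c') * Complex.I_sq
      - b' * hcr + b * hcr'
  -- equation from z
  have E2 : (r:ℂ) * w + (s:ℂ) * conj' w = 2*a*a' - z := by
    rw [hw]
    simp only [_root_.map_mul, Complex.conj_conj]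
    linear_combination -hZ - b' * hcr - b * hcr'
  have e1 := congrArg Complex.im E1
  have e2 := congrArg Complex.im E2
  have haa' : (2*a*a').im = 0 := by
    simp [Complex.mul_im, Complex.mul_re, hare, hare']
  simp only [Complex.sub_im, Complex.add_im, Complex.mul_im, Complex.ofReal_re,
    Complex.ofReal_im, Complex.conj_im, Complex.conj_re, Complex.neg_im, Complex.neg_re,
    Complex.I_re, Complex.I_im, Complex.mul_re, zero_mul, mul_zero, zero_add, sub_zero,
    zero_sub, one_mul, hzim, haa'] at e1 e2
  -- e1 : r * w.im + s * w.im = -τ (up to arrangement), e2 : r * w.im - s * w.im = 0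
  have hwim : w.im ≠ 0 := by
    intro h
    rw [h] at e1
    simp at e1
    linarith
  have hrs : r = s := by
    have h0 : (r - s) * w.im = 0 := by linear_combination e2
    rcases mul_eq_zero.mp h0 with h | h
    · linarith
    · exact absurd h hwim
  have hrneg : r < 0 := div_neg_of_neg_of_pos hpneg
    (lt_of_le_of_ne (Complex.normSq_nonneg b) (Ne.symm hnsb))
  set l : ℝ := Real.sqrt (Real.sqrt (-r)) with hl
  have hlpos : 0 < l := Real.sqrt_pos.mpr (Real.sqrt_pos.mpr (by linarith))
  have hl4 : l^4 = -r := by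
    rw [hl, show (4:ℕ) = 2*2 from rfl, pow_mul, Real.sq_sqrt (Real.sqrt_nonneg _),
      Real.sq_sqrt (by linarith : (0:ℝ) ≤ -r)]
  have hcast : -((l:ℝ):ℂ)^4 = (r:ℂ) := by
    have h9 : -(l^4) = r := by rw [hl4]; ring
    rw [show -((l:ℝ):ℂ)^4 = ((-(l^4):ℝ):ℂ) by push_cast; ring]
    exact_mod_cast congrArg Complex.ofReal h9
  have hconj_a : conj' a = -a := by
    apply Complex.ext <;> simp [hare]
  have hconj_a' : conj' a' = -a' := by
    apply Complex.ext <;> simp [hare']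
  exact ⟨l, hlpos, by rw [hcast]; exact hcr, by rw [hcast, hrs]; exact hcr', hconj_a, hconj_a'⟩

lemma conj_unitary (a b c d lc : ℂ) (hl0 : lc ≠ 0) (hconjl : conj' lc = lc)
    (hd' : d = -a) (hc : c = -lc^4 * conj' b) (hca : conj' a = -a)
    (hdet : -(a^2) - b*c = 1) :
    !![lc,0;0,lc⁻¹] * !![a,b;c,d] * !![lc⁻¹,0;0,lc] ∈ Matrix.unitaryGroup (Fin 2) ℂ := by
  have eform : !![lc,0;0,lc⁻¹] * !![a,b;c,d] * !![lc⁻¹,0;0,lc]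
      = !![a, lc^2*b; -conj' (lc^2*b), conj' a] := by
    rw [Matrix.mul_fin_two, Matrix.mul_fin_two]
    simp only [map_pow, _root_.map_mul, hconjl, hca, hc, hd']
    ext i j
    fin_cases i <;> fin_cases j <;>
      (simp only [Matrix.cons_val', Matrix.cons_val_zero, Matrix.cons_val_one,
        Matrix.head_cons, Matrix.head_fin_const, Matrix.empty_val',
        Matrix.cons_val_fin_one, Fin.mk_zero, Fin.mk_one, Fin.isValue, Matrix.of_apply]) <;>
      field_simp <;> ring
  rw [eform]
  apply unitary_of_form
  simp only [map_pow, _root_.map_mul, hconjl]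
  linear_combination a*hca + b*hc + hdet

lemma K_unitary : !![Complex.I, 0; 0, -Complex.I] ∈ Matrix.unitaryGroup (Fin 2) ℂ := by
  have h := unitary_of_form Complex.I 0 (by
    rw [Complex.conj_I]
    simp)
  have e : !![Complex.I, (0:ℂ); -conj' 0, conj' Complex.I] = !![Complex.I, 0; 0, -Complex.I] := by
    rw [Complex.conj_I]
    norm_num
  rwa [e] at h

lemma adj_of_mul_eq_one {M N : Matrix (Fin 2) (Fin 2) ℂ} (hd : M.det = 1) (h : M * N = 1) :
    M.adjugate = N := by
  calc M.adjugate = M.adjugate * (M * N) := by rw [h, mul_one]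
    _ = (M.adjugate * M) * N := by rw [mul_assoc]
    _ = N := by rw [Matrix.adjugate_mul, hd, one_smul, one_mul]

lemma backward_main (τ : ℝ) (hτ0 : 0 < τ) (x y z : ℂ)
    (A B C : Matrix (Fin 2) (Fin 2) ℂ)
    (hdA : A.det = 1) (hdB : B.det = 1) (hdC : C.det = 1)
    (htA : A.trace = 0) (htB : B.trace = 0) (htC : C.trace = 0)
    (hT : (A*B*C).trace = (τ:ℂ))
    (hx : (A*B).trace = x) (hy : (B*C).trace = y)
    (hz : (B * (A*B*C).adjugate).trace = z)
    (hxim : x.im = 0) (hx1 : -2 < x.re) (hx2 : x.re < 2)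
    (hyim : y.im = 0) (hy1 : -2 < y.re) (hy2 : y.re < 2) (hzim : z.im = 0) :
    ∃ U Ui : Matrix (Fin 2) (Fin 2) ℂ, U.det = 1 ∧ U * Ui = 1 ∧
      U * A * Ui ∈ Matrix.unitaryGroup (Fin 2) ℂ ∧
      U * B * Ui ∈ Matrix.unitaryGroup (Fin 2) ℂ ∧
      U * C * Ui ∈ Matrix.unitaryGroup (Fin 2) ℂ := by
  obtain ⟨V, hdV, hV⟩ := diagonalize B htB hdB
  set K : Matrix (Fin 2) (Fin 2) ℂ := !![Complex.I, 0; 0, -Complex.I] with hK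
  set Vi := V.adjugate with hVi
  have hViV : Vi * V = 1 := by rw [hVi, Matrix.adjugate_mul, hdV, one_smul]
  have hVVi : V * Vi = 1 := by rw [hVi, Matrix.mul_adjugate, hdV, one_smul]
  have hdVi : Vi.det = 1 := by
    rw [hVi, Matrix.det_adjugate, hdV]; norm_num
  set A2 := Vi * A * V with hA2def
  set C2 := Vi * C * V with hC2def
  have hB2 : Vi * B * V = K := by
    rw [mul_assoc, hV, ← mul_assoc, hViV, one_mul]
  have tr_conj : ∀ M : Matrix (Fin 2) (Fin 2) ℂ, (Vi * M * V).trace = M.trace := by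
    intro M
    rw [Matrix.trace_mul_cycle, hVVi, one_mul]
  have sandwich : ∀ M N : Matrix (Fin 2) (Fin 2) ℂ,
      (Vi * M * V) * (Vi * N * V) = Vi * (M * N) * V := by
    intro M N
    calc (Vi * M * V) * (Vi * N * V) = Vi * M * ((V * Vi) * (N * V)) := by
          simp only [mul_assoc]
      _ = Vi * (M * N) * V := by rw [hVVi, one_mul]; simp only [mul_assoc]
  obtain ⟨a, b, c, d, hA2⟩ : ∃ a b c d, A2 = !![a,b;c,d] := ⟨_,_,_,_, Matrix.eta_fin_two A2⟩
  obtain ⟨a', b', c', d', hC2⟩ : ∃ a b c d, C2 = !![a,b;c,d] := ⟨_,_,_,_, Matrix.eta_fin_two C2⟩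
  have htA2 : a + d = 0 := by
    have := tr_conj A
    rw [← hA2def, hA2, Matrix.trace_fin_two_of] at this
    rw [this, htA]
  have htC2 : a' + d' = 0 := by
    have := tr_conj C
    rw [← hC2def, hC2, Matrix.trace_fin_two_of] at this
    rw [this, htC]
  have hdA2 : -(a^2) - b*c = 1 := by
    have h5 : A2.det = 1 := by
      rw [hA2def, Matrix.det_mul, Matrix.det_mul, hdVi, hdA, hdV]; ring
    rw [hA2, Matrix.det_fin_two_of] at h5
    have hd' : d = -a := by linear_combination htA2
    rw [hd'] at h5; linear_combination h5
  have hdC2 : -(a'^2) - b'*c' = 1 := by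
    have h5 : C2.det = 1 := by
      rw [hC2def, Matrix.det_mul, Matrix.det_mul, hdVi, hdC, hdV]; ring
    rw [hC2, Matrix.det_fin_two_of] at h5
    have hd' : d' = -a' := by linear_combination htC2
    rw [hd'] at h5; linear_combination h5
  -- x equation
  have hxe : 2*Complex.I*a = x := by
    have h5 : (A2 * K).trace = x := by
      rw [hA2def, ← hB2, sandwich, tr_conj, hx]
    rw [hA2, hK, Matrix.mul_fin_two, Matrix.trace_fin_two_of] at h5
    have hd' : d = -a := by linear_combination htA2
    rw [hd'] at h5
    linear_combination h5
  have hye : 2*Complex.I*a' = y := by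
    have h5 : (K * C2).trace = y := by
      rw [hC2def, ← hB2, sandwich, tr_conj, hy]
    rw [hC2, hK, Matrix.mul_fin_two, Matrix.trace_fin_two_of] at h5
    have hd' : d' = -a' := by linear_combination htC2
    rw [hd'] at h5
    linear_combination h5
  -- τ equation
  have hTe : Complex.I*(c*b' - b*c') = (τ:ℂ) := by
    have h5 : (A2 * K * C2).trace = (τ:ℂ) := by
      rw [hA2def, ← hB2, hC2def, sandwich, sandwich, tr_conj]
      exact hT
    rw [hA2, hC2, hK, Matrix.mul_fin_two, Matrix.mul_fin_two, Matrix.trace_fin_two_of] at h5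
    have hd' : d = -a := by linear_combination htA2
    have hd'' : d' = -a' := by linear_combination htC2
    rw [hd', hd''] at h5
    linear_combination h5
  -- z equation
  have hZe : 2*a*a' - b*c' - c*b' = z := by
    have hadj : (A*B*C).adjugate = (A*B*C).trace • (1 : Matrix (Fin 2) (Fin 2) ℂ) - A*B*C := by
      obtain ⟨p, q, r, s, hP⟩ : ∃ p q r s, A*B*C = !![p,q;r,s] := ⟨_,_,_,_, Matrix.eta_fin_two _⟩
      rw [hP, Matrix.adjugate_fin_two_of, Matrix.trace_fin_two_of, Matrix.smul_one_eq_diagonal]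
      ext i j
      fin_cases i <;> fin_cases j <;>
        simp [Matrix.diagonal, Matrix.sub_apply] <;> ring
    have h5 : -(B * (A * B * C)).trace = z := by
      rw [← hz, hadj, Matrix.mul_sub, Matrix.trace_sub, mul_smul_comm, mul_one,
        Matrix.trace_smul, htB]
      simp
    have h6 : (K * A2 * K * C2).trace = (B * (A*B*C)).trace := by
      have e1 : K * A2 * K * C2 = Vi * (B * (A*B*C)) * V := by
        rw [← hB2, hA2def, hC2def]
        calc (Vi*B*V) * (Vi*A*V) * (Vi*B*V) * (Vi*C*V)
            = ((Vi*B*V) * (Vi*A*V)) * ((Vi*B*V) * (Vi*C*V)) := by simp only [mul_assoc]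
          _ = (Vi*(B*A)*V) * (Vi*(B*C)*V) := by rw [sandwich, sandwich]
          _ = Vi * ((B*A)*(B*C)) * V := by rw [sandwich]
          _ = Vi * (B * (A*B*C)) * V := by rw [show (B*A)*(B*C) = B*(A*B*C) by
              simp only [mul_assoc]]
      rw [e1, tr_conj]
    rw [← h6] at h5
    rw [hA2, hC2, hK, Matrix.mul_fin_two, Matrix.mul_fin_two, Matrix.mul_fin_two,
      Matrix.trace_fin_two_of] at h5
    have hd' : d = -a := by linear_combination htA2
    have hd'' : d' = -a' := by linear_combination htC2
    rw [hd', hd''] at h5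
    linear_combination h5 + (2*a*a' - b*c' - c*b')*Complex.I_sq
  obtain ⟨l, hlpos, hc, hc', hca, hca'⟩ :=
    core τ hτ0 x y z a b c a' b' c' hdA2 hdC2 hxe hye hTe hZe
      hxim hx1 hx2 hyim hy1 hy2 hzim
  have hl0 : ((l:ℝ):ℂ) ≠ 0 := by
    simp only [ne_eq, Complex.ofReal_eq_zero]
    exact ne_of_gt hlpos
  set lc : ℂ := ((l:ℝ):ℂ) with hlc
  set D : Matrix (Fin 2) (Fin 2) ℂ := !![lc, 0; 0, lc⁻¹] with hD
  set Di : Matrix (Fin 2) (Fin 2) ℂ := !![lc⁻¹, 0; 0, lc] with hDi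
  have hDDi : D * Di = 1 := by
    rw [hD, hDi, Matrix.mul_fin_two, Matrix.one_fin_two]
    field_simp
    norm_num
  have hdD : D.det = 1 := by
    rw [hD, Matrix.det_fin_two_of]
    field_simp
    norm_num
  have hconjl : conj' lc = lc := Complex.conj_ofReal l
  have hd' : d = -a := by linear_combination htA2
  have hd'' : d' = -a' := by linear_combination htC2
  refine ⟨D * Vi, V * Di, ?_, ?_, ?_, ?_, ?_⟩
  · rw [Matrix.det_mul, hdD, hdVi]; ring
  · calc (D * Vi) * (V * Di) = D * ((Vi * V) * Di) := by simp only [mul_assoc]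
      _ = 1 := by rw [hViV, one_mul, hDDi]
  · have e1 : (D * Vi) * A * (V * Di) = D * A2 * Di := by
      rw [hA2def]; simp only [mul_assoc]
    rw [e1, hA2, hD, hDi]
    exact conj_unitary a b c d lc hl0 hconjl hd' hc hca hdA2
  · have e1 : (D * Vi) * B * (V * Di) = D * K * Di := by
      rw [← hB2]; simp only [mul_assoc]
    have e2 : D * K * Di = K := by
      rw [hD, hDi, hK, Matrix.mul_fin_two, Matrix.mul_fin_two]
      ext i j
      fin_cases i <;> fin_cases j <;>
        (simp only [Matrix.cons_val', Matrix.cons_val_zero, Matrix.cons_val_one,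
          Matrix.head_cons, Matrix.head_fin_const, Matrix.empty_val',
          Matrix.cons_val_fin_one, Fin.mk_zero, Fin.mk_one, Fin.isValue, Matrix.of_apply]) <;>
        field_simp <;> ring
    rw [e1, e2, hK]
    exact K_unitary
  · have e1 : (D * Vi) * C * (V * Di) = D * C2 * Di := by
      rw [hC2def]; simp only [mul_assoc]
    rw [e1, hC2, hD, hDi]
    exact conj_unitary a' b' c' d' lc hl0 hconjl hd'' hc' hca' hdC2

lemma adjugate_neg_fin_two (M : Matrix (Fin 2) (Fin 2) ℂ) :
    (-M).adjugate = -(M.adjugate) := by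
  obtain ⟨a, b, c, d, hM⟩ : ∃ a b c d, M = !![a,b;c,d] := ⟨_,_,_,_, Matrix.eta_fin_two M⟩
  subst hM
  have h : -(!![a,b;c,d]) = !![-a,-b;-c,-d] := by
    ext i j; fin_cases i <;> fin_cases j <;> simp
  rw [h, Matrix.adjugate_fin_two_of, Matrix.adjugate_fin_two_of]
  ext i j; fin_cases i <;> fin_cases j <;> simp

lemma trace_conj_sl (U W : Matrix.SpecialLinearGroup (Fin 2) ℂ) :
    Matrix.trace ((U * W * U⁻¹ : Matrix.SpecialLinearGroup (Fin 2) ℂ) : Matrix (Fin 2) (Fin 2) ℂ)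
      = Matrix.trace (W : Matrix (Fin 2) (Fin 2) ℂ) := by
  rw [Matrix.SpecialLinearGroup.coe_mul, Matrix.SpecialLinearGroup.coe_mul,
    Matrix.trace_mul_cycle, ← Matrix.SpecialLinearGroup.coe_mul, inv_mul_cancel,
    Matrix.SpecialLinearGroup.coe_one, one_mul]

lemma coe_conj_back (U W : Matrix.SpecialLinearGroup (Fin 2) ℂ)
    (M : Matrix (Fin 2) (Fin 2) ℂ)
    (h : ((U * W * U⁻¹ : Matrix.SpecialLinearGroup (Fin 2) ℂ) : Matrix (Fin 2) (Fin 2) ℂ) = M) :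
    (W : Matrix (Fin 2) (Fin 2) ℂ)
      = ((U⁻¹ : Matrix.SpecialLinearGroup (Fin 2) ℂ) : Matrix (Fin 2) (Fin 2) ℂ) * M * U := by
  rw [← h, Matrix.SpecialLinearGroup.coe_mul, Matrix.SpecialLinearGroup.coe_mul]
  have h1 : ((U⁻¹ : Matrix.SpecialLinearGroup (Fin 2) ℂ) : Matrix (Fin 2) (Fin 2) ℂ)
      * (U : Matrix (Fin 2) (Fin 2) ℂ) = 1 := by
    rw [← Matrix.SpecialLinearGroup.coe_mul, inv_mul_cancel, Matrix.SpecialLinearGroup.coe_one]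
  have h2 : (U : Matrix (Fin 2) (Fin 2) ℂ)
      * ((U⁻¹ : Matrix.SpecialLinearGroup (Fin 2) ℂ) : Matrix (Fin 2) (Fin 2) ℂ) = 1 := by
    rw [← Matrix.SpecialLinearGroup.coe_mul, mul_inv_cancel, Matrix.SpecialLinearGroup.coe_one]
  symm
  calc ((U⁻¹ : Matrix.SpecialLinearGroup (Fin 2) ℂ) : Matrix (Fin 2) (Fin 2) ℂ)
      * ((U : Matrix (Fin 2) (Fin 2) ℂ) * W * ((U⁻¹ : Matrix.SpecialLinearGroup (Fin 2) ℂ)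
        : Matrix (Fin 2) (Fin 2) ℂ)) * U
      = (((U⁻¹ : Matrix.SpecialLinearGroup (Fin 2) ℂ) : Matrix (Fin 2) (Fin 2) ℂ) * U) * W
        * (((U⁻¹ : Matrix.SpecialLinearGroup (Fin 2) ℂ) : Matrix (Fin 2) (Fin 2) ℂ) * U) := by
        simp only [mul_assoc]
    _ = W := by rw [h1, one_mul, mul_one]

theorem admissible_quadruple_unitarizable_iff_trace_coordinates_real
    (τ : ℝ) (hτ0 : 0 < τ) (hτ2 : τ < 2)
    (L₁ L₂ L₃ L₄ : Matrix.SpecialLinearGroup (Fin 2) ℂ)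
    (hprod : L₁ * L₂ * L₃ * L₄ = 1)
    (h1 : Matrix.trace (L₁ : Matrix (Fin 2) (Fin 2) ℂ) = 0)
    (h2 : Matrix.trace (L₂ : Matrix (Fin 2) (Fin 2) ℂ) = 0)
    (h3 : Matrix.trace (L₃ : Matrix (Fin 2) (Fin 2) ℂ) = 0)
    (h4 : Matrix.trace (L₄ : Matrix (Fin 2) (Fin 2) ℂ) = (τ : ℂ))
    (x y z : ℂ)
    (hx : x = Matrix.trace ((L₁ : Matrix (Fin 2) (Fin 2) ℂ) * (L₂ : Matrix (Fin 2) (Fin 2) ℂ)))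
    (hy : y = Matrix.trace ((L₂ : Matrix (Fin 2) (Fin 2) ℂ) * (L₃ : Matrix (Fin 2) (Fin 2) ℂ)))
    (hz : z = Matrix.trace ((L₂ : Matrix (Fin 2) (Fin 2) ℂ) * (L₄ : Matrix (Fin 2) (Fin 2) ℂ))) :
    (∃ U : Matrix.SpecialLinearGroup (Fin 2) ℂ,
        ((U * L₁ * U⁻¹ : Matrix.SpecialLinearGroup (Fin 2) ℂ) : Matrix (Fin 2) (Fin 2) ℂ)
          ∈ Matrix.unitaryGroup (Fin 2) ℂ ∧
        ((U * L₂ * U⁻¹ : Matrix.SpecialLinearGroup (Fin 2) ℂ) : Matrix (Fin 2) (Fin 2) ℂ)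
          ∈ Matrix.unitaryGroup (Fin 2) ℂ ∧
        ((U * L₃ * U⁻¹ : Matrix.SpecialLinearGroup (Fin 2) ℂ) : Matrix (Fin 2) (Fin 2) ℂ)
          ∈ Matrix.unitaryGroup (Fin 2) ℂ ∧
        ((U * L₄ * U⁻¹ : Matrix.SpecialLinearGroup (Fin 2) ℂ) : Matrix (Fin 2) (Fin 2) ℂ)
          ∈ Matrix.unitaryGroup (Fin 2) ℂ)
    ↔ (x.im = 0 ∧ -2 < x.re ∧ x.re < 2 ∧ y.im = 0 ∧ -2 < y.re ∧ y.re < 2 ∧ z.im = 0) := by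
  have hτC : (τ:ℂ) ≠ 0 := by exact_mod_cast hτ0.ne'
  have hL4 : L₄ = (L₁ * L₂ * L₃)⁻¹ := (inv_eq_of_mul_eq_one_right hprod).symm
  constructor
  · rintro ⟨U, hU1, hU2, hU3, hU4⟩
    have key : ∀ (W1 W2 : Matrix.SpecialLinearGroup (Fin 2) ℂ),
        ((U * W1 * U⁻¹ : Matrix.SpecialLinearGroup (Fin 2) ℂ) : Matrix (Fin 2) (Fin 2) ℂ)
          ∈ Matrix.unitaryGroup (Fin 2) ℂ →
        ((U * W2 * U⁻¹ : Matrix.SpecialLinearGroup (Fin 2) ℂ) : Matrix (Fin 2) (Fin 2) ℂ)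
          ∈ Matrix.unitaryGroup (Fin 2) ℂ →
        ∀ w : ℂ, Matrix.trace ((W1 : Matrix (Fin 2) (Fin 2) ℂ) * (W2 : Matrix (Fin 2) (Fin 2) ℂ)) = w →
        w.im = 0 ∧ -2 ≤ w.re ∧ w.re ≤ 2 ∧
          (w.re = 2 → ((W1 * W2 : _) : Matrix (Fin 2) (Fin 2) ℂ) = 1) ∧
          (w.re = -2 → ((W1 * W2 : _) : Matrix (Fin 2) (Fin 2) ℂ) = -1) := by
      intro W1 W2 hm1 hm2 w hw
      have hgrp : U * (W1*W2) * U⁻¹ = (U*W1*U⁻¹) * (U*W2*U⁻¹) := by group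
      have hmem : ((U * (W1*W2) * U⁻¹ : Matrix.SpecialLinearGroup (Fin 2) ℂ)
          : Matrix (Fin 2) (Fin 2) ℂ) ∈ Matrix.unitaryGroup (Fin 2) ℂ := by
        rw [hgrp, Matrix.SpecialLinearGroup.coe_mul]; exact mul_mem hm1 hm2
      have htr : Matrix.trace ((U * (W1*W2) * U⁻¹ : Matrix.SpecialLinearGroup (Fin 2) ℂ)
          : Matrix (Fin 2) (Fin 2) ℂ) = w := by
        rw [trace_conj_sl, Matrix.SpecialLinearGroup.coe_mul]; exact hw
      obtain ⟨him, hb1, hb2, he2, hem2⟩ :=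
        su2_trace _ hmem (Matrix.SpecialLinearGroup.det_coe _)
      rw [htr] at him hb1 hb2 he2 hem2
      refine ⟨him, hb1, hb2, ?_, ?_⟩
      · intro h
        have hc := coe_conj_back U (W1*W2) 1 (he2 h)
        rw [hc, mul_one, ← Matrix.SpecialLinearGroup.coe_mul, inv_mul_cancel,
          Matrix.SpecialLinearGroup.coe_one]
      · intro h
        have hc := coe_conj_back U (W1*W2) (-1) (hem2 h)
        rw [hc, mul_neg_one, neg_mul, ← Matrix.SpecialLinearGroup.coe_mul, inv_mul_cancel,
          Matrix.SpecialLinearGroup.coe_one]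
    obtain ⟨hxim, hxb1, hxb2, hx2eq, hxm2eq⟩ := key L₁ L₂ hU1 hU2 x hx.symm
    obtain ⟨hyim, hyb1, hyb2, hy2eq, hym2eq⟩ := key L₂ L₃ hU2 hU3 y hy.symm
    obtain ⟨hzim, _, _, _, _⟩ := key L₂ L₄ hU2 hU4 z hz.symm
    have hxne2 : x.re ≠ 2 := by
      intro h
      have h12' : L₁ * L₂ = 1 :=
        Subtype.ext ((hx2eq h).trans Matrix.SpecialLinearGroup.coe_one.symm)
      have h34 : L₃ * L₄ = 1 := by
        have h5 : (L₁*L₂) * (L₃*L₄) = 1 := by rw [← hprod]; group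
        rw [h12', one_mul] at h5; exact h5
      have hL43 : L₄ = L₃⁻¹ := (inv_eq_of_mul_eq_one_right h34).symm
      have h5 : Matrix.trace (↑L₄ : Matrix (Fin 2) (Fin 2) ℂ) = 0 := by
        rw [hL43, Matrix.SpecialLinearGroup.coe_inv, trace_adjugate_fin_two, h3]
      rw [h4] at h5; exact hτC h5
    have hxnem2 : x.re ≠ -2 := by
      intro h
      have h123 : ((L₁*L₂*L₃ : Matrix.SpecialLinearGroup (Fin 2) ℂ)
          : Matrix (Fin 2) (Fin 2) ℂ) = -(↑L₃ : Matrix (Fin 2) (Fin 2) ℂ) := by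
        rw [Matrix.SpecialLinearGroup.coe_mul, hxm2eq h, neg_one_mul]
      have h5 : Matrix.trace (↑L₄ : Matrix (Fin 2) (Fin 2) ℂ) = 0 := by
        rw [hL4, Matrix.SpecialLinearGroup.coe_inv, h123, adjugate_neg_fin_two,
          Matrix.trace_neg, trace_adjugate_fin_two, h3, neg_zero]
      rw [h4] at h5; exact hτC h5
    have hyne2 : y.re ≠ 2 := by
      intro h
      have h23' : L₂ * L₃ = 1 :=
        Subtype.ext ((hy2eq h).trans Matrix.SpecialLinearGroup.coe_one.symm)
      have h123 : L₁ * L₂ * L₃ = L₁ := by rw [mul_assoc, h23', mul_one]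
      have h5 : Matrix.trace (↑L₄ : Matrix (Fin 2) (Fin 2) ℂ) = 0 := by
        rw [hL4, h123, Matrix.SpecialLinearGroup.coe_inv, trace_adjugate_fin_two, h1]
      rw [h4] at h5; exact hτC h5
    have hynem2 : y.re ≠ -2 := by
      intro h
      have h123 : ((L₁*L₂*L₃ : Matrix.SpecialLinearGroup (Fin 2) ℂ)
          : Matrix (Fin 2) (Fin 2) ℂ) = -(↑L₁ : Matrix (Fin 2) (Fin 2) ℂ) := by
        rw [show L₁*L₂*L₃ = L₁*(L₂*L₃) from mul_assoc L₁ L₂ L₃,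
          Matrix.SpecialLinearGroup.coe_mul, hym2eq h, mul_neg_one]
      have h5 : Matrix.trace (↑L₄ : Matrix (Fin 2) (Fin 2) ℂ) = 0 := by
        rw [hL4, Matrix.SpecialLinearGroup.coe_inv, h123, adjugate_neg_fin_two,
          Matrix.trace_neg, trace_adjugate_fin_two, h1, neg_zero]
      rw [h4] at h5; exact hτC h5
    exact ⟨hxim, lt_of_le_of_ne hxb1 (fun h => hxnem2 h.symm), lt_of_le_of_ne hxb2 hxne2,
      hyim, lt_of_le_of_ne hyb1 (fun h => hynem2 h.symm), lt_of_le_of_ne hyb2 hyne2, hzim⟩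
  · rintro ⟨hxim, hx1, hx2, hyim, hy1, hy2, hzim⟩
    have hcoeL4 : (↑L₄ : Matrix (Fin 2) (Fin 2) ℂ)
        = ((L₁ : Matrix (Fin 2) (Fin 2) ℂ) * (L₂ : Matrix (Fin 2) (Fin 2) ℂ) * (L₃ : Matrix (Fin 2) (Fin 2) ℂ)).adjugate := by
      rw [hL4, Matrix.SpecialLinearGroup.coe_inv, Matrix.SpecialLinearGroup.coe_mul,
        Matrix.SpecialLinearGroup.coe_mul]
    have hT' : ((L₁ : Matrix (Fin 2) (Fin 2) ℂ) * (L₂ : Matrix (Fin 2) (Fin 2) ℂ) * (L₃ : Matrix (Fin 2) (Fin 2) ℂ)).trace = (τ:ℂ) := by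
      rw [← trace_adjugate_fin_two, ← hcoeL4, h4]
    have hz' : ((L₂ : Matrix (Fin 2) (Fin 2) ℂ)
        * ((L₁ : Matrix (Fin 2) (Fin 2) ℂ) * (L₂ : Matrix (Fin 2) (Fin 2) ℂ) * (L₃ : Matrix (Fin 2) (Fin 2) ℂ)).adjugate).trace = z := by
      rw [← hcoeL4, ← hz]
    obtain ⟨Um, Uim, hdU, hUUi, hu1, hu2, hu3⟩ :=
      backward_main τ hτ0 x y z (L₁ : Matrix (Fin 2) (Fin 2) ℂ) (L₂ : Matrix (Fin 2) (Fin 2) ℂ) (L₃ : Matrix (Fin 2) (Fin 2) ℂ)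
        (Matrix.SpecialLinearGroup.det_coe _) (Matrix.SpecialLinearGroup.det_coe _)
        (Matrix.SpecialLinearGroup.det_coe _) h1 h2 h3 hT' hx.symm hy.symm hz'
        hxim hx1 hx2 hyim hy1 hy2 hzim
    set Usl : Matrix.SpecialLinearGroup (Fin 2) ℂ := ⟨Um, hdU⟩ with hUsl
    have hinv : ((Usl⁻¹ : Matrix.SpecialLinearGroup (Fin 2) ℂ) : Matrix (Fin 2) (Fin 2) ℂ)
        = Uim := by
      rw [Matrix.SpecialLinearGroup.coe_inv]
      exact adj_of_mul_eq_one hdU hUUi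
    have hcoeU : (Usl : Matrix (Fin 2) (Fin 2) ℂ) = Um := rfl
    have hg1 : ((Usl * L₁ * Usl⁻¹ : Matrix.SpecialLinearGroup (Fin 2) ℂ)
        : Matrix (Fin 2) (Fin 2) ℂ) ∈ Matrix.unitaryGroup (Fin 2) ℂ := by
      rw [Matrix.SpecialLinearGroup.coe_mul, Matrix.SpecialLinearGroup.coe_mul, hinv, hcoeU]
      exact hu1
    have hg2 : ((Usl * L₂ * Usl⁻¹ : Matrix.SpecialLinearGroup (Fin 2) ℂ)
        : Matrix (Fin 2) (Fin 2) ℂ) ∈ Matrix.unitaryGroup (Fin 2) ℂ := by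
      rw [Matrix.SpecialLinearGroup.coe_mul, Matrix.SpecialLinearGroup.coe_mul, hinv, hcoeU]
      exact hu2
    have hg3 : ((Usl * L₃ * Usl⁻¹ : Matrix.SpecialLinearGroup (Fin 2) ℂ)
        : Matrix (Fin 2) (Fin 2) ℂ) ∈ Matrix.unitaryGroup (Fin 2) ℂ := by
      rw [Matrix.SpecialLinearGroup.coe_mul, Matrix.SpecialLinearGroup.coe_mul, hinv, hcoeU]
      exact hu3
    refine ⟨Usl, hg1, hg2, hg3, ?_⟩
    have hgrp : Usl * L₄ * Usl⁻¹
        = ((Usl * L₁ * Usl⁻¹) * (Usl * L₂ * Usl⁻¹) * (Usl * L₃ * Usl⁻¹))⁻¹ := by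
      rw [hL4]; group
    rw [hgrp, Matrix.SpecialLinearGroup.coe_inv]
    have hPmem : (((Usl * L₁ * Usl⁻¹) * (Usl * L₂ * Usl⁻¹) * (Usl * L₃ * Usl⁻¹)
        : Matrix.SpecialLinearGroup (Fin 2) ℂ) : Matrix (Fin 2) (Fin 2) ℂ)
        ∈ Matrix.unitaryGroup (Fin 2) ℂ := by
      rw [Matrix.SpecialLinearGroup.coe_mul, Matrix.SpecialLinearGroup.coe_mul]
      exact mul_mem (mul_mem hg1 hg2) hg3
    rw [← star_eq_adjugate _ hPmem (Matrix.SpecialLinearGroup.det_coe _)]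
    exact Unitary.star_mem hPmem
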